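/- Let X_1, X_2, … be independent and identically distributed strictly positive random variables with mean μ > 0 and finite variance v, let S_m = Σ_{i=1}^m X_i (with S_0 = 0), and define the renewal counting process J(t) = sup{m ≥ 0 : S_m ≤ t}. Fix ε ∈ (0,1). Then there exists T > 0 such that for all t ≥ T, P( J(t) < (t/μ)(1 − ε) ) ≤ (v/ε²) · (2/(tμ) + 1/t²). -/

import Mathlib

open MeasureTheory ProbabilityTheory

/-- The renewal counting process: the number of completed renewals by time t, i.e.
the largest m with S_m = X_1 + … + X_m ≤ t. -/
noncomputable def renewalCount {Ω : Type*} (X : ℕ → Ω → ℝ) (t : ℝ) (ω : Ω) : ℕ :=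
  sSup {m : ℕ | ∑ i ∈ Finset.range m, X i ω ≤ t}

set_option maxHeartbeats 1600000 in
/-- High-probability lower bound on the renewal counting process: for iid strictly
positive inter-renewal times with mean m_ and variance v, and ε ∈ (0,1), for all
large enough t, P(J(t) < (t/m_)(1 − ε)) ≤ (v/ε²)(2/(t m_) + 1/t²). -/
theorem renewal_count_lower_tail
    {Ω : Type*} [MeasurableSpace Ω] (μ : Measure Ω) [IsProbabilityMeasure μ]
    (X : ℕ → Ω → ℝ) (hmeas : ∀ i, Measurable (X i))
    (hindep : iIndepFun X μ)
    (hident : ∀ i, Measure.map (X i) μ = Measure.map (X 0) μ)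
    (hpos : ∀ i, ∀ᵐ ω ∂μ, 0 < X i ω)
    (m_ v : ℝ) (hm_ : 0 < m_) (hL2 : ∀ i, MemLp (X i) 2 μ)
    (hmean : ∀ i, ∫ ω, X i ω ∂μ = m_)
    (hvar : ∀ i, variance (X i) μ = v)
    (ε : ℝ) (hε0 : 0 < ε) (hε1 : ε < 1) :
    ∃ T > (0 : ℝ), ∀ t ≥ T,
      (μ {ω | ((renewalCount X t ω : ℝ)) < t / m_ * (1 - ε)}).toReal ≤
        v / ε ^ 2 * (2 / (t * m_) + 1 / t ^ 2) := by
  have hv0 : 0 ≤ v := (hvar 0) ▸ variance_nonneg _ _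
  -- strong law of large numbers
  have hident' : ∀ i, IdentDistrib (X i) (X 0) μ μ := fun i =>
    ⟨(hmeas i).aemeasurable, (hmeas 0).aemeasurable, hident i⟩
  have hpair : Pairwise (Function.onFun (IndepFun · · μ) X) := fun i j hij => hindep.indepFun hij
  have hint : Integrable (X 0) μ := (hL2 0).integrable one_le_two
  have hslln := strong_law_ae_real X hint hpair hident'
  rw [hmean 0] at hslln
  refine ⟨max 1 ((4 * m_ + 2 * m_ ^ 2) / ε), lt_of_lt_of_le one_pos (le_max_left _ _), ?_⟩
  intro t ht
  have ht1 : (1 : ℝ) ≤ t := le_trans (le_max_left _ _) ht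
  have ht0 : (0 : ℝ) < t := lt_of_lt_of_le one_pos ht1
  have htε : 4 * m_ + 2 * m_ ^ 2 ≤ ε * t := by
    have := le_trans (le_max_right 1 ((4 * m_ + 2 * m_ ^ 2) / ε)) ht
    calc 4 * m_ + 2 * m_ ^ 2 = (4 * m_ + 2 * m_ ^ 2) / ε * ε := by field_simp
    _ ≤ t * ε := by nlinarith
    _ = ε * t := mul_comm _ _
  set x : ℝ := t / m_ * (1 - ε) with hx
  have hx0 : 0 ≤ x := by
    apply mul_nonneg (div_nonneg ht0.le hm_.le); linarith
  set m₀ : ℕ := ⌈x⌉₊ with hm₀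
  have hm₀le : (m₀ : ℝ) ≤ x + 1 := (Nat.ceil_lt_add_one hx0).le
  have hxle : x ≤ (m₀ : ℝ) := Nat.le_ceil x
  -- the sum S_{m₀}
  set S : Ω → ℝ := ∑ i ∈ Finset.range m₀, X i with hS
  have hSapp : ∀ ω, S ω = ∑ i ∈ Finset.range m₀, X i ω := by
    intro ω; simp [hS]
  have hSL2 : MemLp S 2 μ := memLp_finset_sum' _ (fun i _ => hL2 i)
  -- mean and variance of S
  have hSmean : ∫ ω, S ω ∂μ = m₀ * m_ := by
    simp only [hS, Finset.sum_apply]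
    rw [integral_finset_sum _ (fun i _ => (hL2 i).integrable one_le_two)]
    simp [hmean]
  have hSvar : variance S μ = m₀ * v := by
    rw [hS, IndepFun.variance_sum (fun i _ => hL2 i)
      (fun i hi j hj hij => hindep.indepFun hij)]
    simp [hvar]
  -- key inclusion (up to null sets)
  have hincl : μ {ω | ((renewalCount X t ω : ℝ)) < x} ≤ μ {ω | t < S ω} := by
    apply measure_mono_ae
    filter_upwards [hslln] with ω hω
    intro hlt
    replace hlt : ((renewalCount X t ω : ℝ)) < x := hlt
    by_contra hnot
    replace hnot : S ω ≤ t := not_lt.1 hnot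
    -- S_{m₀} ω ≤ t, and sums tend to ∞, so renewalCount ≥ m₀
    have htend : Filter.Tendsto (fun n : ℕ => ∑ i ∈ Finset.range n, X i ω)
        Filter.atTop Filter.atTop := by
      have h1 : Filter.Tendsto (fun n : ℕ =>
          ((∑ i ∈ Finset.range n, X i ω) / n) * n) Filter.atTop Filter.atTop :=
        Filter.Tendsto.pos_mul_atTop hm_ hω tendsto_natCast_atTop_atTop
      apply h1.congr'
      filter_upwards [Filter.eventually_ge_atTop 1] with n hn
      have : (n : ℝ) ≠ 0 := by positivity
      field_simp
    obtain ⟨N, hN⟩ := (htend.eventually_gt_atTop t).exists_forall_of_atTop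
    have hbdd : BddAbove {m : ℕ | ∑ i ∈ Finset.range m, X i ω ≤ t} := by
      refine ⟨N, fun m hm => ?_⟩
      by_contra hmN
      push_neg at hmN
      exact absurd hm (not_le.2 (hN m hmN.le))
    have hmem : m₀ ∈ {m : ℕ | ∑ i ∈ Finset.range m, X i ω ≤ t} := by
      show ∑ i ∈ Finset.range m₀, X i ω ≤ t
      rw [← hSapp ω]; exact hnot
    have : m₀ ≤ renewalCount X t ω := le_csSup hbdd hmem
    have : x ≤ (renewalCount X t ω : ℝ) := le_trans hxle (by exact_mod_cast this)
    linarith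
  -- Chebyshev
  set c : ℝ := t - m₀ * m_ with hc
  have hxm : x * m_ = t * (1 - ε) := by rw [hx]; field_simp
  have hm₀m : (m₀ : ℝ) * m_ ≤ t * (1 - ε) + m_ := by nlinarith [hm₀le]
  have hclb : ε * t - m_ ≤ c := by rw [hc]; nlinarith
  have hεtm : 0 < ε * t - m_ := by nlinarith
  have hcpos : 0 < c := lt_of_lt_of_le hεtm hclb
  have hincl2 : μ {ω | t < S ω} ≤ μ {ω | c ≤ |S ω - ∫ a, S a ∂μ|} := by
    apply measure_mono
    intro ω hω
    simp only [Set.mem_setOf_eq] at hω ⊢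
    rw [hSmean]
    have : c ≤ S ω - m₀ * m_ := by simp only [hc]; linarith
    exact le_trans this (le_abs_self _)
  have hcheb := meas_ge_le_variance_div_sq (μ := μ) hSL2 hcpos
  rw [hSvar] at hcheb
  have hfinal : (μ {ω | ((renewalCount X t ω : ℝ)) < x}).toReal ≤ m₀ * v / c ^ 2 := by
    apply ENNReal.toReal_le_of_le_ofReal
    · positivity
    · exact le_trans hincl (le_trans hincl2 hcheb)
  refine le_trans hfinal ?_
  -- arithmetic
  have hm₀' : (m₀ : ℝ) ≤ (1 - ε) * t / m_ + 1 := by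
    have hxe : (1 - ε) * t / m_ = x := by rw [hx]; ring
    linarith
  have hrhs : v / ε ^ 2 * (2 / (t * m_) + 1 / t ^ 2)
      = v * ((2 * t / m_ + 1) / (ε ^ 2 * t ^ 2)) := by
    field_simp
  rw [hrhs]
  have hsplit : (m₀ : ℝ) * v / c ^ 2 = v * ((m₀ : ℝ) / c ^ 2) := by ring
  rw [hsplit]
  apply mul_le_mul_of_nonneg_left _ hv0
  rw [div_le_div_iff₀ (by positivity) (by positivity)]
  -- goal: m₀ * (ε² t²) ≤ (2t/m_ + 1) * c²
  have hc2 : (ε * t - m_) ^ 2 ≤ c ^ 2 := by nlinarith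
  have hq : 4 * m_ * t + 2 * m_ ^ 2 ≤ ε * t ^ 2 := by
    nlinarith [mul_le_mul_of_nonneg_right htε ht0.le, sq_nonneg m_]
  have key' : ((1 - ε) * t + m_) * (ε ^ 2 * t ^ 2) ≤ (2 * t + m_) * (ε * t - m_) ^ 2 := by
    have e1 : 0 ≤ ε * t * (ε * t ^ 2 - (4 * m_ * t + 2 * m_ ^ 2)) :=
      mul_nonneg (by positivity) (by linarith)
    have e3 : 0 ≤ ε ^ 3 * t ^ 3 := by positivity
    have e4 : 0 ≤ m_ ^ 3 := by positivity
    have e5 : 0 ≤ 2 * t * m_ ^ 2 := by positivity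
    nlinarith [e1, e3, e4, e5]
  have key : ((1 - ε) * t / m_ + 1) * (ε ^ 2 * t ^ 2) ≤ (2 * t / m_ + 1) * (ε * t - m_) ^ 2 := by
    have h1 : ((1 - ε) * t / m_ + 1) * (ε ^ 2 * t ^ 2)
        = (((1 - ε) * t + m_) * (ε ^ 2 * t ^ 2)) / m_ := by field_simp
    have h2 : (2 * t / m_ + 1) * (ε * t - m_) ^ 2
        = ((2 * t + m_) * (ε * t - m_) ^ 2) / m_ := by field_simp
    rw [h1, h2]
    exact (div_le_div_iff_of_pos_right hm_).2 key'
  calc (m₀ : ℝ) * (ε ^ 2 * t ^ 2) ≤ ((1 - ε) * t / m_ + 1) * (ε ^ 2 * t ^ 2) := by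
        apply mul_le_mul_of_nonneg_right hm₀' (by positivity)
  _ ≤ (2 * t / m_ + 1) * (ε * t - m_) ^ 2 := key
  _ ≤ (2 * t / m_ + 1) * c ^ 2 := by
      apply mul_le_mul_of_nonneg_left hc2
      positivity
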